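/- Define X = ∪_{a∈A} [0, δ(a)) × {a} and the Dumont–Thomas transformation T_σ : X → X by T_σ(y,b) = (α y − δ(p), a), where (p, a, s) is the unique decomposition σ(b) = p a s with α y − δ(p) ∈ [0, δ(a)). Then T_σ maps Frac(σ) = {(x,a) : a ∈ A, x ∈ Frac(σ,a)} onto itself; in fact, for every edge b →p a of the prefix automaton and every x ∈ Frac(σ,a), the element y = α⁻¹(x + δ(p)) lies in Frac(σ,b) and satisfies T_σ(y,b) = (x,a). -/

import Mathlib

/- Common setup: non-unit irreducible Pisot substitutions, following
Minervino–Thuswaldner, "The geometry of non-unit Pisot substitutions". -/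

open NumberField IsDedekindDomain MeasureTheory Filter

noncomputable section

/-- A substitution (given by the images of the letters) applied to a word. -/
def subApply {n : ℕ} (word : Fin n → List (Fin n)) (w : List (Fin n)) : List (Fin n) :=
  w.flatMap word

/-- The incidence matrix of a substitution: `(M_σ)_{a,b} = |σ(b)|_a`. -/
def incMat {n : ℕ} (word : Fin n → List (Fin n)) : Matrix (Fin n) (Fin n) ℚ :=
  fun a b => ((word b).count a : ℚ)

/-- `δ(w) = ⟨P(w), v_α⟩`, where `P` is the abelianisation map. -/
def dlt {n : ℕ} {K : Type*} [Field K] (v : Fin n → K) (w : List (Fin n)) : K :=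
  ∑ a : Fin n, (w.count a : K) * v a

/-- `σ` is an irreducible Pisot substitution with associated Pisot number `α ∈ K = ℚ(α)`,
where `embℝ : K →+* ℝ` is the distinguished real embedding (the place `𝔭₁`). -/
structure IsIrrPisot {n : ℕ} {K : Type*} [Field K] [NumberField K]
    (word : Fin n → List (Fin n)) (α : K) (embℝ : K →+* ℝ) : Prop where
  npos : 0 < n
  word_ne : ∀ a, word a ≠ []
  integral : IsIntegral ℤ α
  gen : IntermediateField.adjoin ℚ ({α} : Set K) = ⊤
  one_lt : 1 < embℝ α
  conj_lt : ∀ φ : K →+* ℂ, φ α ≠ (embℝ α : ℂ) → ‖φ α‖ < 1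
  charpoly_irr : Irreducible (incMat word).charpoly
  charpoly_root : Polynomial.aeval α (incMat word).charpoly = 0

/-- `v` is a left eigenvector of the incidence matrix for the eigenvalue `α`,
with entries positive under the real embedding `𝔭₁`. -/
structure IsPisotEigenvector {n : ℕ} {K : Type*} [Field K] [NumberField K]
    (word : Fin n → List (Fin n)) (α : K) (embℝ : K →+* ℝ) (v : Fin n → K) : Prop where
  left_eig : ∀ b, ∑ a : Fin n, ((word b).count a : K) * v a = α * v b
  pos : ∀ i, 0 < embℝ (v i)

/-- The ℤ-module `V = ⟨v₁,…,vₙ⟩_ℤ`. -/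
def Vmod {n : ℕ} {K : Type*} [Field K] (v : Fin n → K) : Submodule ℤ K :=
  Submodule.span ℤ (Set.range v)

/-- The ℤ-module `V·ℤ[α⁻¹]` of finite sums `Σ xⱼ α^{−kⱼ}`, `xⱼ ∈ V`. -/
def VZmod {n : ℕ} {K : Type*} [Field K] (α : K) (v : Fin n → K) : Submodule ℤ K :=
  Submodule.span ℤ {y : K | ∃ (i : Fin n) (k : ℕ), y = v i * α⁻¹ ^ k}

/-- `Frac(σ,a) = V·ℤ[α⁻¹] ∩ [0, δ(a))` (interval taken in `ℝ` under `𝔭₁`). -/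
def fracSet {n : ℕ} {K : Type*} [Field K] (α : K) (v : Fin n → K) (embℝ : K →+* ℝ)
    (a : Fin n) : Set K :=
  {x : K | x ∈ VZmod α v ∧ 0 ≤ embℝ x ∧ embℝ x < embℝ (v a)}

variable (K : Type*) [Field K] [NumberField K]

/-- The representation space `K_σ`, the product of the completions of `K` at all places of
`S_α` other than `𝔭₁`: the real places `≠ 𝔭₁`, the complex places, and the finite primes
dividing `(α)`. -/
abbrev RepSpace (α : K) (p₁ : InfinitePlace K) : Type _ :=
  ({w : InfinitePlace K // w.IsReal ∧ w ≠ p₁} → ℝ) ×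
  ({w : InfinitePlace K // w.IsComplex} → ℂ) ×
  ((w : {w : HeightOneSpectrum (𝓞 K) // w.valuation K α < 1}) → w.1.adicCompletion K)

/-- `K_α = K_{𝔭₁} × K_σ = ℝ × K_σ`. -/
abbrev FullSpace (α : K) (p₁ : InfinitePlace K) : Type _ := ℝ × RepSpace K α p₁

/-- The diagonal embedding `Φ' : K → K_σ`. -/
def embσ (α : K) (p₁ : InfinitePlace K) : K →+* RepSpace K α p₁ :=
  (Pi.ringHom fun w => InfinitePlace.embedding_of_isReal w.2.1).prod
    ((Pi.ringHom fun w => w.1.embedding).prod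
      (Pi.ringHom fun w => algebraMap K (w.1.adicCompletion K)))

/-- The diagonal embedding `Φ : K → K_α`. -/
def embα (α : K) (p₁ : InfinitePlace K) (embℝ : K →+* ℝ) : K →+* FullSpace K α p₁ :=
  embℝ.prod (embσ K α p₁)


/-- `T_ext⁻¹` acting on `K_α × A` (used for the stepped surface). -/
def TinvFull {n : ℕ} (word : Fin n → List (Fin n)) (α : K) (v : Fin n → K)
    (p₁ : InfinitePlace K) (embℝ : K →+* ℝ) (q : FullSpace K α p₁ × Fin n) :
    Set (FullSpace K α p₁ × Fin n) :=
  {r | ∃ p s : List (Fin n), word r.2 = p ++ q.2 :: s ∧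
        r.1 = embα K α p₁ embℝ α⁻¹ * (q.1 + embα K α p₁ embℝ (dlt v p))}

/-- The stepped surface `S = {(Φ(x), a) : x ∈ Frac(σ,a)} ⊆ K_α × A`. -/
def steppedSurface {n : ℕ} (α : K) (v : Fin n → K) (p₁ : InfinitePlace K)
    (embℝ : K →+* ℝ) : Set (FullSpace K α p₁ × Fin n) :=
  {q | ∃ x ∈ fracSet α v embℝ q.2, q.1 = embα K α p₁ embℝ x}

variable {K}

/-- A uniformly discrete subset of a topological additive group. -/
def UnifDiscrete {G : Type*} [AddGroup G] [TopologicalSpace G] (W : Set G) : Prop :=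
  ∃ U ∈ nhds (0 : G), ∀ x ∈ W, ∀ y ∈ W, x ≠ y → x - y ∉ U

/-- A relatively dense subset of a topological additive group. -/
def RelDense {G : Type*} [AddGroup G] [TopologicalSpace G] (W : Set G) : Prop :=
  ∃ C : Set G, IsCompact C ∧ ∀ z : G, ∃ w ∈ W, z - w ∈ C

/-- A Delone set: uniformly discrete and relatively dense. -/
def IsDeloneSet {G : Type*} [AddGroup G] [TopologicalSpace G] (W : Set G) : Prop :=
  UnifDiscrete W ∧ RelDense W

variable (K)

/-- The translation set `Γ = {(Φ'(x), a) : x ∈ Frac(σ,a)} ⊆ K_σ × A`. -/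
def transSet {n : ℕ} (α : K) (v : Fin n → K) (p₁ : InfinitePlace K) (embℝ : K →+* ℝ) :
    Set (RepSpace K α p₁ × Fin n) :=
  {q | ∃ x ∈ fracSet α v embℝ q.2, q.1 = embσ K α p₁ x}

/-- The Dumont–Thomas subtile `R_σ(a) ⊆ K_σ`: all limits of the partial sums of series
`Σ_{i ≥ 0} α^i Φ'(δ(pᵢ))` over labels `(pᵢ)` of left-infinite walks `⋯ → a₁ → a₀ = a`
in the prefix automaton. -/
def subtile {n : ℕ} (word : Fin n → List (Fin n)) (α : K) (v : Fin n → K)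
    (p₁ : InfinitePlace K) (a : Fin n) : Set (RepSpace K α p₁) :=
  {z | ∃ (st : ℕ → Fin n) (pre : ℕ → List (Fin n)),
    st 0 = a ∧
    (∀ i : ℕ, ∃ s : List (Fin n), word (st (i + 1)) = pre i ++ st i :: s) ∧
    Tendsto (fun N => ∑ i ∈ Finset.range N, embσ K α p₁ (α ^ i * dlt v (pre i)))
      atTop (nhds z)}

/-- The extension `T_ext⁻¹` acting on `K_σ × A`:
`T_ext⁻¹(γ,a) = ⋃_{b →p a} {(α⁻¹(γ + Φ'(δ(p))), b)}`. -/
def Tinv {n : ℕ} (word : Fin n → List (Fin n)) (α : K) (v : Fin n → K)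
    (p₁ : InfinitePlace K) (q : RepSpace K α p₁ × Fin n) : Set (RepSpace K α p₁ × Fin n) :=
  {r | ∃ p s : List (Fin n), word r.2 = p ++ q.2 :: s ∧
        r.1 = embσ K α p₁ α⁻¹ * (q.1 + embσ K α p₁ (dlt v p))}

/-- `T_ext⁻¹` acting elementwise on sets of pairs. -/
def TinvSet {n : ℕ} (word : Fin n → List (Fin n)) (α : K) (v : Fin n → K)
    (p₁ : InfinitePlace K) (S : Set (RepSpace K α p₁ × Fin n)) :
    Set (RepSpace K α p₁ × Fin n) :=
  ⋃ q ∈ S, Tinv K word α v p₁ q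

/-- The geometric property (F): `Γ = ⋃_{m ≥ 0} T_ext^{−m}(U)` with `U = {(0,a) : a ∈ A}`. -/
def PropertyF {n : ℕ} (word : Fin n → List (Fin n)) (α : K) (v : Fin n → K)
    (p₁ : InfinitePlace K) (embℝ : K →+* ℝ) : Prop :=
  transSet K α v p₁ embℝ =
    ⋃ m : ℕ, (TinvSet K word α v p₁)^[m] {q : RepSpace K α p₁ × Fin n | q.1 = 0}

variable {K}

/-- The strong coincidence condition. -/
def StrongCoincidence {n : ℕ} (word : Fin n → List (Fin n)) : Prop :=
  ∀ b₁ b₂ : Fin n, ∃ (k : ℕ) (a : Fin n) (p₁ s₁ p₂ s₂ : List (Fin n)),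
    (subApply word)^[k] [b₁] = p₁ ++ a :: s₁ ∧
    (subApply word)^[k] [b₂] = p₂ ++ a :: s₂ ∧
    ((∀ c : Fin n, p₁.count c = p₂.count c) ∨ (∀ c : Fin n, s₁.count c = s₂.count c))

/-- The element `Multiplicative.ofAdd (−m)` of `ℤₘ₀`; the valuation `v_𝔭(x) ≥ m` is
expressed as `v.valuation x ≤ zhat m`. -/
def zhat (m : ℤ) : WithZero (Multiplicative ℤ) :=
  ((Multiplicative.ofAdd (-m) : Multiplicative ℤ) : WithZero (Multiplicative ℤ))


section auxLemmas

lemma dlt_append' {n : ℕ} {K : Type*} [Field K] (v : Fin n → K) (p q : List (Fin n)) :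
    dlt v (p ++ q) = dlt v p + dlt v q := by
  simp only [dlt, List.count_append]
  rw [← Finset.sum_add_distrib]
  apply Finset.sum_congr rfl
  intro a _
  push_cast
  ring

lemma dlt_singleton' {n : ℕ} {K : Type*} [Field K] (v : Fin n → K) (a : Fin n) :
    dlt v [a] = v a := by
  rw [dlt, Finset.sum_eq_single a]
  · simp
  · intro b _ hb
    have : ([a].count b) = 0 := by
      rw [List.count_eq_zero]
      simpa using hb
    simp [this]
  · simp

lemma dlt_cons' {n : ℕ} {K : Type*} [Field K] (v : Fin n → K) (a : Fin n)
    (s : List (Fin n)) : dlt v (a :: s) = v a + dlt v s := by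
  have : (a :: s) = [a] ++ s := rfl
  rw [this, dlt_append', dlt_singleton']

lemma embℝ_dlt_nonneg {n : ℕ} {K : Type*} [Field K] (v : Fin n → K) (f : K →+* ℝ)
    (hv : ∀ i, 0 < f (v i)) (p : List (Fin n)) : 0 ≤ f (dlt v p) := by
  rw [dlt, map_sum]
  apply Finset.sum_nonneg
  intro a _
  rw [map_mul, map_natCast]
  exact mul_nonneg (Nat.cast_nonneg _) (hv a).le

lemma v_mem_VZmod' {n : ℕ} {K : Type*} [Field K] (α : K) (v : Fin n → K) (i : Fin n) :
    v i ∈ VZmod α v :=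
  Submodule.subset_span ⟨i, 0, by simp⟩

lemma dlt_mem_VZmod' {n : ℕ} {K : Type*} [Field K] (α : K) (v : Fin n → K)
    (p : List (Fin n)) : dlt v p ∈ VZmod α v := by
  rw [dlt]
  apply Submodule.sum_mem
  intro a _
  have h : ((p.count a : K)) * v a = (p.count a : ℤ) • v a := by
    rw [zsmul_eq_mul]; push_cast; ring
  rw [h]
  exact Submodule.smul_mem _ _ (v_mem_VZmod' α v a)

lemma inv_mul_mem_VZmod' {n : ℕ} {K : Type*} [Field K] (α : K) (v : Fin n → K)
    {x : K} (hx : x ∈ VZmod α v) : α⁻¹ * x ∈ VZmod α v := by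
  have h : VZmod α v ≤ Submodule.comap (LinearMap.mulLeft ℤ (α⁻¹ : K)) (VZmod α v) := by
    rw [VZmod, Submodule.span_le]
    rintro y ⟨i, k, rfl⟩
    simp only [Set.mem_setOf_eq, SetLike.mem_coe, Submodule.mem_comap,
      LinearMap.mulLeft_apply]
    exact Submodule.subset_span ⟨i, k + 1, by ring⟩
  exact h hx

lemma two_decomps' {β : Type*} {p s p' s' : List β} {a a' : β}
    (h : p ++ a :: s = p' ++ a' :: s') :
    (p' = p ∧ a' = a ∧ s' = s) ∨ (∃ t, p' = p ++ a :: t) ∨ (∃ t, p = p' ++ a' :: t) := by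
  rcases lt_trichotomy p.length p'.length with hl | hl | hl
  · right; left
    have hpre : p <+: p' :=
      List.prefix_of_prefix_length_le ⟨a :: s, h⟩ ⟨a' :: s', rfl⟩ hl.le
    obtain ⟨u, rfl⟩ := hpre
    rw [List.append_assoc] at h
    have hu : a :: s = u ++ a' :: s' := List.append_cancel_left h
    cases u with
    | nil => simp at hl
    | cons c t =>
      rw [List.cons_append] at hu
      obtain ⟨rfl, -⟩ : a = c ∧ s = t ++ a' :: s' := by
        constructor <;> [exact (List.cons.injEq ..).mp hu |>.1;
          exact (List.cons.injEq ..).mp hu |>.2]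
      exact ⟨t, rfl⟩
  · left
    obtain ⟨h1, h2⟩ := List.append_inj h hl
    obtain ⟨rfl, rfl⟩ : a = a' ∧ s = s' := by
      constructor <;> [exact (List.cons.injEq ..).mp h2 |>.1;
        exact (List.cons.injEq ..).mp h2 |>.2]
    exact ⟨h1.symm, rfl, rfl⟩
  · right; right
    have hpre : p' <+: p :=
      List.prefix_of_prefix_length_le ⟨a' :: s', rfl⟩ ⟨a :: s, h⟩ hl.le
    obtain ⟨u, rfl⟩ := hpre
    rw [List.append_assoc] at h
    have hu : u ++ a :: s = a' :: s' := List.append_cancel_left h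
    cases u with
    | nil => simp at hl
    | cons c t =>
      rw [List.cons_append] at hu
      obtain ⟨rfl, -⟩ : c = a' ∧ t ++ a :: s = s' := by
        constructor <;> [exact (List.cons.injEq ..).mp hu |>.1;
          exact (List.cons.injEq ..).mp hu |>.2]
      exact ⟨t, rfl⟩

end auxLemmas

/-- the Dumont–Thomas transformation `T_σ` maps `Frac(σ)` onto itself:
for every edge `b →p a` of the prefix automaton and every `x ∈ Frac(σ,a)`, the element
`y = α⁻¹(x + δ(p))` lies in `Frac(σ,b)` and `T_σ(y,b) = (x,a)` (i.e. `(p,a,s)` is the unique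
decomposition of `σ(b)` with `αy − δ(p) ∈ [0, δ(a))`); moreover every `(x,a) ∈ Frac(σ)`
arises this way. -/
theorem stmt6 {n : ℕ} {K : Type*} [Field K] [NumberField K]
    (word : Fin n → List (Fin n)) (α : K) (p₁ : InfinitePlace K) (hp₁ : p₁.IsReal)
    (embℝ : K →+* ℝ) (hembℝ : embℝ = InfinitePlace.embedding_of_isReal hp₁)
    (v : Fin n → K)
    (hσ : IsIrrPisot word α embℝ)
    (hv : IsPisotEigenvector word α embℝ v) :
    (∀ (b a : Fin n) (p s : List (Fin n)), word b = p ++ a :: s →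
      ∀ x ∈ fracSet α v embℝ a,
        α⁻¹ * (x + dlt v p) ∈ fracSet α v embℝ b ∧
        (∀ (p' : List (Fin n)) (a' : Fin n) (s' : List (Fin n)),
          word b = p' ++ a' :: s' →
          0 ≤ embℝ (α * (α⁻¹ * (x + dlt v p)) - dlt v p') →
          embℝ (α * (α⁻¹ * (x + dlt v p)) - dlt v p') < embℝ (v a') →
          p' = p ∧ a' = a ∧ s' = s)) ∧
    (∀ a : Fin n, ∀ x ∈ fracSet α v embℝ a,
      ∃ (b : Fin n) (p s : List (Fin n)), word b = p ++ a :: s) := by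
  have hα1 : (1 : ℝ) < embℝ α := hσ.one_lt
  have hαpos : (0 : ℝ) < embℝ α := lt_trans one_pos hα1
  have hαne : α ≠ 0 := by
    intro h
    rw [h, map_zero] at hα1
    linarith
  have hvpos := hv.pos
  have hdlt_word : ∀ b, dlt v (word b) = α * v b := fun b => hv.left_eig b
  constructor
  · intro b a p s hword x hx
    obtain ⟨hxV, hx0, hx1⟩ := hx
    have hδp : 0 ≤ embℝ (dlt v p) := embℝ_dlt_nonneg v embℝ hvpos p
    have hδs : 0 ≤ embℝ (dlt v s) := embℝ_dlt_nonneg v embℝ hvpos s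
    have hkey : embℝ α * embℝ (v b) =
        embℝ (dlt v p) + (embℝ (v a) + embℝ (dlt v s)) := by
      have h1 := hdlt_word b
      rw [hword, dlt_append', dlt_cons'] at h1
      have h2 := congrArg embℝ h1
      rw [map_mul, map_add, map_add] at h2
      linarith [h2]
    refine ⟨⟨?_, ?_, ?_⟩, ?_⟩
    · have : α⁻¹ * (x + dlt v p) = α⁻¹ * x + α⁻¹ * dlt v p := by ring
      rw [this]
      exact Submodule.add_mem _ (inv_mul_mem_VZmod' α v hxV)
        (inv_mul_mem_VZmod' α v (dlt_mem_VZmod' α v p))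
    · rw [map_mul, map_add, map_inv₀]
      exact mul_nonneg (inv_nonneg.mpr hαpos.le) (by linarith)
    · rw [map_mul, map_add, map_inv₀, inv_mul_lt_iff₀ hαpos]
      linarith
    · intro p' a' s' hword' h0 h1
      have hsimp : α * (α⁻¹ * (x + dlt v p)) = x + dlt v p := by
        field_simp
      rw [hsimp] at h0 h1
      rcases two_decomps' (hword.symm.trans hword') with h | ⟨t, rfl⟩ | ⟨t, rfl⟩
      · exact h
      · exfalso
        have e : x + dlt v p - dlt v (p ++ a :: t) = x - v a - dlt v t := by
          rw [dlt_append', dlt_cons']; ring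
        rw [e, map_sub, map_sub] at h0
        have := embℝ_dlt_nonneg v embℝ hvpos t
        linarith
      · exfalso
        have e : x + dlt v (p' ++ a' :: t) - dlt v p' = x + v a' + dlt v t := by
          rw [dlt_append', dlt_cons']; ring
        rw [e, map_add, map_add] at h1
        have := embℝ_dlt_nonneg v embℝ hvpos t
        linarith
  · intro a x hx
    by_contra hc
    push_neg at hc
    have hrow : ∀ b, (word b).count a = 0 := by
      intro b
      rw [List.count_eq_zero]
      intro hmem
      obtain ⟨p, s, hps⟩ := List.append_of_mem hmem
      exact hc b p s hps
    have hdet : (incMat word).det = 0 := by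
      apply Matrix.det_eq_zero_of_row_eq_zero a
      intro b
      simp [incMat, hrow b]
    have hX : Polynomial.X ∣ (incMat word).charpoly := by
      rw [Polynomial.X_dvd_iff]
      have h := Matrix.det_eq_sign_charpoly_coeff (incMat word)
      rw [hdet] at h
      rcases mul_eq_zero.mp h.symm with h' | h'
      · exact absurd h' (pow_ne_zero _ (neg_ne_zero.mpr one_ne_zero))
      · exact h'
    obtain ⟨q, hq⟩ := hX
    rcases hσ.charpoly_irr.isUnit_or_isUnit hq with hu | hu
    · exact Polynomial.not_isUnit_X hu
    · have hroot := hσ.charpoly_root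
      rw [hq, map_mul, Polynomial.aeval_X] at hroot
      have hqne : Polynomial.aeval α q ≠ 0 :=
        (hu.map (Polynomial.aeval α)).ne_zero
      rcases mul_eq_zero.mp hroot with h' | h'
      · exact hαne h'
      · exact hqne h'
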